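/- With λ_n and γ_n as above (λ_n = n − ∑_{k>n}γ_k, γ_n ≥ 0, ∑γ_n = −λ₀), the quantities κ_n = (λ_n − λ_0)^{-1} ∏_{p≠n}(1 − γ_p/(λ_p − λ_n)) satisfy 0 < κ_n ≤ e^{−λ₀}/n for every n ≥ 1. -/

import Mathlib

noncomputable section

open scoped BigOperators

/-- With `λ_n = n − ∑_{k>n} γ_k`, `γ_n ≥ 0` summable (so `∑ γ_n = −λ₀`), the
quantities `κ_n = (λ_n − λ_0)⁻¹ ∏_{p≠n, p≥1} (1 − γ_p/(λ_p − λ_n))` satisfy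
`0 < κ_n ≤ e^{−λ₀}/n` for every `n ≥ 1`. Here `γ_p = λ_p − λ_{p-1} − 1`. -/
theorem stmt11 (lam : ℕ → ℝ)
    (hgap : ∀ p : ℕ, 0 ≤ lam (p + 1) - lam p - 1)
    (hsum : Summable fun p : ℕ => lam (p + 1) - lam p - 1)
    (hform : ∀ n : ℕ, lam n = n - ∑' i : ℕ, (lam (n + i + 1) - lam (n + i) - 1)) :
    ∀ n : ℕ, 1 ≤ n →
      0 < (lam n - lam 0)⁻¹ *
          ∏' p : {p : ℕ // 1 ≤ p ∧ p ≠ n},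
            (1 - (lam p.1 - lam (p.1 - 1) - 1) / (lam p.1 - lam n)) ∧
      (lam n - lam 0)⁻¹ *
          ∏' p : {p : ℕ // 1 ≤ p ∧ p ≠ n},
            (1 - (lam p.1 - lam (p.1 - 1) - 1) / (lam p.1 - lam n)) ≤
        Real.exp (-lam 0) / n := by
  set γ : ℕ → ℝ := fun p => lam (p + 1) - lam p - 1 with hγdef
  have hγ0 : ∀ p, 0 ≤ γ p := hgap
  have hstep : ∀ p, lam p + 1 ≤ lam (p + 1) := fun p => by have := hgap p; simp only [hγdef] at *; linarith
  have hmono : ∀ a b : ℕ, a ≤ b → (b : ℝ) - a ≤ lam b - lam a := by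
    intro a b hab
    induction b with
    | zero =>
      interval_cases a
      simp
    | succ b ih =>
      rcases Nat.lt_or_ge a (b + 1) with h | h
      · have hab' : a ≤ b := Nat.lt_succ_iff.mp h
        have h1 := ih hab'
        have h2 := hstep b
        push_cast
        linarith
      · have : a = b + 1 := le_antisymm hab h
        subst this; simp
    -- end
  have hlam0 : -lam 0 = ∑' i, γ i := by
    have := hform 0
    simp only [Nat.cast_zero, zero_add] at this
    linarith [this]
  intro n hn
  set f : {p : ℕ // 1 ≤ p ∧ p ≠ n} → ℝ :=
    fun p => 1 - (lam p.1 - lam (p.1 - 1) - 1) / (lam p.1 - lam n) with hfdef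
  have hnum : ∀ p : {p : ℕ // 1 ≤ p ∧ p ≠ n},
      lam p.1 - lam (p.1 - 1) - 1 = γ (p.1 - 1) := by
    rintro ⟨p, hp1, hpn⟩
    have : p - 1 + 1 = p := Nat.succ_pred_eq_of_pos hp1
    simp only [hγdef, this]
  have key : ∀ p : {p : ℕ // 1 ≤ p ∧ p ≠ n},
      Real.exp (-(γ (p.1 - 1))) ≤ f p ∧ f p ≤ Real.exp (γ (p.1 - 1)) := by
    rintro ⟨p, hp1, hpn⟩
    have hnum' := hnum ⟨p, hp1, hpn⟩
    simp only [hfdef, hnum']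
    set g : ℝ := γ (p - 1) with hgdef
    have hg0 : 0 ≤ g := hγ0 _
    have h1g : 1 + g ≤ Real.exp g := by
      have := Real.add_one_le_exp g; linarith
    have hexpg1 : (1 : ℝ) ≤ Real.exp g := by
      calc (1 : ℝ) ≤ 1 + g := by linarith
        _ ≤ Real.exp g := h1g
    rcases Nat.lt_or_ge p n with hpltn | hpgen
    · -- p < n : denominator negative, factor in [1, 1+g]
      have hd : (1 : ℝ) ≤ lam n - lam p := by
        have := hmono p n hpltn.le
        have : (1 : ℝ) ≤ (n : ℝ) - p := by
          have : (p : ℝ) + 1 ≤ n := by exact_mod_cast hpltn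
          linarith
        linarith [hmono p n hpltn.le]
      have hdpos : (0 : ℝ) < lam n - lam p := by linarith
      have hrw : g / (lam p - lam n) = -(g / (lam n - lam p)) := by
        rw [show lam p - lam n = -(lam n - lam p) by ring, div_neg]
      rw [hrw]
      have hq0 : 0 ≤ g / (lam n - lam p) := div_nonneg hg0 hdpos.le
      have hqle : g / (lam n - lam p) ≤ g := div_le_self hg0 hd
      constructor
      · have : Real.exp (-g) ≤ 1 := by
          rw [Real.exp_le_one_iff]; linarith
        linarith
      · calc 1 - -(g / (lam n - lam p)) = 1 + g / (lam n - lam p) := by ring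
          _ ≤ 1 + g := by linarith
          _ ≤ Real.exp g := h1g
    · -- p > n : denominator ≥ 1 + g
      have hpltn : n < p := lt_of_le_of_ne hpgen (fun h => hpn h.symm)
      have hq : n ≤ p - 1 := by omega
      have hp1' : p - 1 + 1 = p := Nat.succ_pred_eq_of_pos hp1
      have h2 : (p - 1 : ℕ) - (n : ℝ) ≤ lam (p - 1) - lam n := hmono n (p - 1) hq
      have h3 : lam (p - 1) + 1 + g ≤ lam p := by
        have hγp : lam (p - 1 + 1) - lam (p - 1) - 1 = g := by
          simp [hgdef, hγdef]
        rw [hp1'] at hγp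
        linarith
      have hcast : (0 : ℝ) ≤ ((p - 1 : ℕ) : ℝ) - n := by
        have : (n : ℝ) ≤ ((p - 1 : ℕ) : ℝ) := by exact_mod_cast hq
        linarith
      have hd : 1 + g ≤ lam p - lam n := by linarith
      have hdpos : (0 : ℝ) < lam p - lam n := by linarith
      constructor
      · -- exp(-g) ≤ 1/(1+g) ≤ 1 - g/d
        have h1 : Real.exp (-g) ≤ 1 / (1 + g) := by
          rw [Real.exp_neg]
          rw [div_eq_inv_mul, mul_one]
          exact inv_anti₀ (by linarith) h1g
        have h2' : 1 / (1 + g) ≤ 1 - g / (lam p - lam n) := by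
          rw [div_le_iff₀ (by linarith : (0:ℝ) < 1 + g)]
          have : (1 - g / (lam p - lam n)) * (1 + g)
              = 1 + g - g * (1 + g) / (lam p - lam n) := by ring
          rw [this]
          have : g * (1 + g) / (lam p - lam n) ≤ g := by
            rw [div_le_iff₀ hdpos]
            nlinarith
          linarith
        linarith
      · have : 0 ≤ g / (lam p - lam n) := div_nonneg hg0 hdpos.le
        linarith
  have hfpos : ∀ p, 0 < f p := fun p => lt_of_lt_of_le (Real.exp_pos _) (key p).1
  -- summability of the γ's over the subtype
  set ι : {p : ℕ // 1 ≤ p ∧ p ≠ n} → ℕ := fun p => p.1 - 1 with hιdef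
  have hι : Function.Injective ι := by
    intro a b hab
    have h1 : a.1 - 1 = b.1 - 1 := hab
    have h2 := a.2.1
    have h3 := b.2.1
    exact Subtype.ext (by omega)
  have hsumsub : Summable (fun p : {p : ℕ // 1 ≤ p ∧ p ≠ n} => γ (p.1 - 1)) :=
    hsum.comp_injective hι
  -- summability of logs
  have hlogbd : ∀ p, ‖Real.log (f p)‖ ≤ γ (p.1 - 1) := by
    intro p
    rw [Real.norm_eq_abs, abs_le]
    obtain ⟨h1, h2⟩ := key p
    constructor
    · have := Real.log_le_log (Real.exp_pos _) h1
      rwa [Real.log_exp] at this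
    · have := Real.log_le_log (hfpos p) h2
      rwa [Real.log_exp] at this
  have hsumlog : Summable (fun p => Real.log (f p)) :=
    Summable.of_norm_bounded hsumsub hlogbd
  set S : ℝ := ∑' p, Real.log (f p) with hSdef
  have hprod : HasProd f (Real.exp S) := by
    have h := hsumlog.hasSum.rexp
    have heq : (Real.exp ∘ fun p => Real.log (f p)) = f := by
      funext p
      simp [Real.exp_log (hfpos p)]
    rwa [heq] at h
  have htprod : (∏' p, f p) = Real.exp S := hprod.tprod_eq
  -- bound S
  have hSle : S ≤ -lam 0 := by
    have h1 : S ≤ ∑' p : {p : ℕ // 1 ≤ p ∧ p ≠ n}, γ (p.1 - 1) := by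
      refine Summable.tsum_le_tsum (fun p => ?_) hsumlog hsumsub
      have := (hlogbd p)
      rw [Real.norm_eq_abs, abs_le] at this
      exact this.2
    have h2 : (∑' p : {p : ℕ // 1 ≤ p ∧ p ≠ n}, γ (p.1 - 1)) ≤ ∑' i, γ i :=
      Summable.tsum_le_tsum_of_inj ι hι (fun c _ => hγ0 c) (fun p => le_rfl) hsumsub hsum
    rw [hlam0]
    linarith
  have hlamn : (n : ℝ) ≤ lam n - lam 0 := by
    have := hmono 0 n (Nat.zero_le n)
    simpa using this
  have hnpos : (0 : ℝ) < n := by exact_mod_cast hn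
  have hdpos : (0 : ℝ) < lam n - lam 0 := lt_of_lt_of_le hnpos hlamn
  constructor
  · rw [htprod]
    exact mul_pos (inv_pos.2 hdpos) (Real.exp_pos S)
  · rw [htprod]
    have h1 : (lam n - lam 0)⁻¹ ≤ (n : ℝ)⁻¹ := inv_anti₀ hnpos hlamn
    have h2 : Real.exp S ≤ Real.exp (-lam 0) := Real.exp_le_exp.2 hSle
    calc (lam n - lam 0)⁻¹ * Real.exp S ≤ (n : ℝ)⁻¹ * Real.exp (-lam 0) :=
          mul_le_mul h1 h2 (Real.exp_pos S).le (by positivity)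
      _ = Real.exp (-lam 0) / n := by rw [div_eq_mul_inv, mul_comm]
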